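/- Under the setup of the generalized beta k-function of the first kind with Kummer's transformation (n ≥ 2, k > 0, a > 0, b − a > 0, η > 0, ζ ≥ 0, φ ∈ (0,∞)^n), one has β_{ζ,k}^{(a,b)}(φ; η) ≥ β_k(φ; η) · e^{−ζ^k/(η^k n^n)} · ₁F_{1,k}(b − a; b; η^k n^n / k), where β_k(φ; η) = (1/k^{n−1}) ∫_{E_{n-1}} ∏_i t_i^{φ_i/k−1} e^{−η^k/(kπ(t))} dt. -/

import Mathlib

open MeasureTheory Real Set

noncomputable section

/-- Open standard (n-1)-simplex in ℝ^{n-1}. -/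
def simplexInt (n : ℕ) : Set (Fin (n-1) → ℝ) :=
  {t | (∀ i, 0 < t i) ∧ ∑ i, t i < 1}

/-- Barycentric coordinates: `t_1, …, t_{n-1}` and `t_n = 1 - ∑_{i<n} t_i`. -/
def bary (n : ℕ) (t : Fin (n-1) → ℝ) (i : Fin n) : ℝ :=
  if h : (i : ℕ) < n - 1 then t ⟨i, h⟩ else 1 - ∑ j, t j

/-- Product of the n barycentric coordinates. -/
def piT (n : ℕ) (t : Fin (n-1) → ℝ) : ℝ := ∏ i : Fin n, bary n t i

/-- Euler-integral confluent hypergeometric k-function ₁F_{1,k}(a;b;l). -/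
def F1k (k a b l : ℝ) : ℝ :=
  (1/k) * (Real.Gamma b / (Real.Gamma a * Real.Gamma (b-a))) *
    ∫ u in Set.Ioo (0:ℝ) 1, u ^ (a/k - 1) * (1-u) ^ ((b-a)/k - 1) * Real.exp (l*u)

/-- Beta k-function of n variables. -/
def betaK (n : ℕ) (k : ℝ) (φ : Fin n → ℝ) : ℝ :=
  (1/k^(n-1)) * ∫ t in simplexInt n, ∏ i, bary n t i ^ (φ i / k - 1)

/-- Extended beta k-function β_k(φ; η). -/
def betaKe (n : ℕ) (k : ℝ) (φ : Fin n → ℝ) (η : ℝ) : ℝ :=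
  (1/k^(n-1)) * ∫ t in simplexInt n,
    (∏ i, bary n t i ^ (φ i / k - 1)) * Real.exp (-(η^k)/(k * piT n t))

/-- Generalized beta k-function of the first kind. -/
def betaFirst (n : ℕ) (k a b η ζ : ℝ) (φ : Fin n → ℝ) : ℝ :=
  (1/k^(n-1)) * ∫ t in simplexInt n,
    (∏ i, bary n t i ^ (φ i / k - 1)) *
      F1k k a b (-(η^k)/(k * piT n t) - ζ^k * piT n t / η^k)

/-- Generalized beta k-function of the second kind. -/
def betaSecond (n : ℕ) (k : ℝ) (p q η ζ φ : Fin n → ℝ) : ℝ :=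
  (1/k^(n-1)) * ∫ t in simplexInt n,
    ∏ i, (bary n t i ^ (φ i / k - 1) *
      F1k k (p i) (q i) (-((η i)^k)/(k * bary n t i) - (ζ i)^k * bary n t i / (η i)^k))

/-- Extended beta k-function of the second kind (vector η). -/
def betaKe2 (n : ℕ) (k : ℝ) (φ η : Fin n → ℝ) : ℝ :=
  (1/k^(n-1)) * ∫ t in simplexInt n,
    ∏ i, (bary n t i ^ (φ i / k - 1) * Real.exp (-((η i)^k)/(k * bary n t i)))

open scoped ENNReal


lemma rpow_le_bound {x c : ℝ} (q : ℝ) (hc : 0 < c) (hx1 : c ≤ x) (hx2 : x ≤ 1) :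
    x ^ q ≤ c ^ q + 1 := by
  rcases le_or_gt 0 q with h | h
  · have : x ^ q ≤ 1 ^ q := Real.rpow_le_rpow (le_trans hc.le hx1) hx2 h
    simp only [Real.one_rpow] at this
    have : (0:ℝ) ≤ c ^ q := Real.rpow_nonneg hc.le q
    linarith [Real.rpow_le_rpow (le_trans hc.le hx1) hx2 h, Real.one_rpow q]
  · have := Real.rpow_le_rpow_of_nonpos hc hx1 h.le
    linarith

lemma betaIntegrable {p q : ℝ} (hp : -1 < p) (hq : -1 < q) :
    IntegrableOn (fun u : ℝ => u ^ p * (1-u) ^ q) (Set.Ioo (0:ℝ) 1) := by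
  have hmeas : Measurable (fun u : ℝ => u ^ p * (1-u) ^ q) :=
    (measurable_id.pow_const p).mul ((measurable_const.sub measurable_id).pow_const q)
  have h1 : IntegrableOn (fun u : ℝ => u ^ p * (1-u) ^ q) (Set.Ioc (0:ℝ) (1/2)) := by
    have hint : IntegrableOn (fun u : ℝ => u ^ p) (Set.Ioc (0:ℝ) (1/2)) :=
      (intervalIntegral.intervalIntegrable_rpow' hp).1
    refine Integrable.mono' (hint.const_mul (((1/2:ℝ)) ^ q + 1)) hmeas.aestronglyMeasurable.restrict ?_
    filter_upwards [ae_restrict_mem measurableSet_Ioc] with u hu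
    have hu0 : 0 < u := hu.1
    have hu2 : (1:ℝ)/2 ≤ 1 - u := by linarith [hu.2]
    have h1u : 1 - u ≤ 1 := by linarith
    have hb : (1-u) ^ q ≤ (1/2:ℝ) ^ q + 1 := rpow_le_bound q (by norm_num) hu2 h1u
    rw [Real.norm_eq_abs, abs_of_nonneg (mul_nonneg (Real.rpow_nonneg hu0.le _) (Real.rpow_nonneg (by linarith) _))]
    rw [mul_comm ((1/2:ℝ) ^ q + 1)]
    exact mul_le_mul_of_nonneg_left hb (Real.rpow_nonneg hu0.le _)
  have h2 : IntegrableOn (fun u : ℝ => u ^ p * (1-u) ^ q) (Set.Ioc (1/2:ℝ) 1) := by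
    have hint : IntegrableOn (fun u : ℝ => (1-u) ^ q) (Set.Ioc (1/2:ℝ) 1) := by
      have := ((intervalIntegral.intervalIntegrable_rpow' hq (a := 0) (b := 1/2)).comp_sub_left 1).symm
      have h := this.1
      norm_num at h
      exact h
    refine Integrable.mono' (hint.const_mul (((1/2:ℝ)) ^ p + 1)) hmeas.aestronglyMeasurable.restrict ?_
    filter_upwards [ae_restrict_mem measurableSet_Ioc] with u hu
    have hu0 : (1:ℝ)/2 < u := hu.1
    have hu1 : u ≤ 1 := hu.2
    have h1u : 0 ≤ 1 - u := by linarith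
    have hb : u ^ p ≤ (1/2:ℝ) ^ p + 1 := rpow_le_bound p (by norm_num) hu0.le hu1
    rw [Real.norm_eq_abs, abs_of_nonneg (mul_nonneg (Real.rpow_nonneg (by linarith) _) (Real.rpow_nonneg h1u _))]
    rw [mul_comm ((1/2:ℝ) ^ p + 1)]
    rw [mul_comm (u ^ p)]
    exact mul_le_mul_of_nonneg_left hb (Real.rpow_nonneg h1u _)
  have hsub : Set.Ioo (0:ℝ) 1 ⊆ Set.Ioc (0:ℝ) (1/2) ∪ Set.Ioc (1/2:ℝ) 1 := by
    intro u hu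
    rcases le_or_gt u (1/2) with h | h
    · exact Or.inl ⟨hu.1, h⟩
    · exact Or.inr ⟨h, hu.2.le⟩
  exact (h1.union h2).mono_set hsub

lemma F1k_integrandIntegrable {p q : ℝ} (l : ℝ) (hp : -1 < p) (hq : -1 < q) :
    IntegrableOn (fun u : ℝ => u ^ p * (1-u) ^ q * Real.exp (l*u)) (Set.Ioo (0:ℝ) 1) := by
  refine Integrable.mono' ((betaIntegrable hp hq).const_mul (Real.exp |l|))
    (((((measurable_id.pow_const p).mul ((measurable_const.sub measurable_id).pow_const q))).mul
      (Real.measurable_exp.comp (measurable_const.mul measurable_id))).aestronglyMeasurable.restrict) ?_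
  filter_upwards [ae_restrict_mem measurableSet_Ioo] with u hu
  have h0 : (0:ℝ) ≤ u ^ p * (1-u) ^ q :=
    mul_nonneg (Real.rpow_nonneg hu.1.le _) (Real.rpow_nonneg (by linarith [hu.2]) _)
  rw [Real.norm_eq_abs, abs_of_nonneg (mul_nonneg h0 (Real.exp_pos _).le), mul_comm (Real.exp |l|)]
  refine mul_le_mul_of_nonneg_left (Real.exp_le_exp.2 ?_) h0
  calc l * u ≤ |l * u| := le_abs_self _
  _ = |l| * |u| := abs_mul _ _
  _ ≤ |l| * 1 := by
      refine mul_le_mul_of_nonneg_left ?_ (abs_nonneg l)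
      rw [abs_of_nonneg hu.1.le]; exact hu.2.le
  _ = |l| := mul_one _

lemma integral_reflect (A B l : ℝ) :
    ∫ u in Set.Ioo (0:ℝ) 1, u ^ A * (1-u) ^ B * Real.exp (-(l*u))
      = Real.exp (-l) * ∫ u in Set.Ioo (0:ℝ) 1, u ^ B * (1-u) ^ A * Real.exp (l*u) := by
  rw [← integral_Ioc_eq_integral_Ioo, ← integral_Ioc_eq_integral_Ioo,
      ← intervalIntegral.integral_of_le (zero_le_one (α := ℝ)),
      ← intervalIntegral.integral_of_le (zero_le_one (α := ℝ))]
  have h := intervalIntegral.integral_comp_sub_left (a := (0:ℝ)) (b := 1)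
    (fun x => x ^ B * (1-x) ^ A * Real.exp (l*x)) 1
  norm_num at h
  rw [← h, ← intervalIntegral.integral_const_mul]
  refine intervalIntegral.integral_congr fun u _ => ?_
  rw [show Real.exp (-l) * ((1-u) ^ B * u ^ A * Real.exp (l*(1-u)))
      = (1-u) ^ B * u ^ A * (Real.exp (l*(1-u)) * Real.exp (-l)) from by ring,
    ← Real.exp_add, show l*(1-u) + -l = -(l*u) from by ring]
  ring

lemma F1k_kummer (k a b l : ℝ) :
    F1k k a b (-l) = Real.exp (-l) * F1k k (b-a) b l := by
  unfold F1k
  rw [sub_sub_cancel]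
  have : ∀ u : ℝ, Real.exp (-l * u) = Real.exp (-(l*u)) := fun u => by rw [neg_mul]
  simp only [this]
  rw [integral_reflect (a/k-1) ((b-a)/k-1) l]
  ring

lemma F1k_nonneg {k a b : ℝ} (hk : 0 < k) (ha : 0 < a) (hab : 0 < b - a) (l : ℝ) :
    0 ≤ F1k k a b l := by
  have hb : 0 < b := by linarith
  refine mul_nonneg (mul_nonneg (by positivity)
    (div_nonneg (Real.Gamma_pos_of_pos hb).le
      (mul_nonneg (Real.Gamma_pos_of_pos ha).le (Real.Gamma_pos_of_pos hab).le))) ?_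
  refine setIntegral_nonneg measurableSet_Ioo fun u hu => ?_
  have h1 : (0:ℝ) ≤ 1 - u := by linarith [hu.2]
  have h2 : 0 < u := hu.1
  positivity

lemma F1k_mono {k a b : ℝ} (hk : 0 < k) (ha : 0 < a) (hab : 0 < b - a) :
    Monotone (F1k k a b) := by
  intro l1 l2 hl
  have hb : 0 < b := by linarith
  have hA : -1 < a/k - 1 := by have := div_pos ha hk; linarith
  have hB : -1 < (b-a)/k - 1 := by have := div_pos hab hk; linarith
  unfold F1k
  refine mul_le_mul_of_nonneg_left ?_ (mul_nonneg (by positivity)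
    (div_nonneg (Real.Gamma_pos_of_pos hb).le
      (mul_nonneg (Real.Gamma_pos_of_pos ha).le (Real.Gamma_pos_of_pos hab).le)))
  refine setIntegral_mono_on (F1k_integrandIntegrable l1 hA hB)
    (F1k_integrandIntegrable l2 hA hB) measurableSet_Ioo fun u hu => ?_
  have h1 : (0:ℝ) ≤ 1 - u := by linarith [hu.2]
  have h2 : 0 < u := hu.1
  have h0 : (0:ℝ) ≤ u ^ (a/k-1) * (1-u) ^ ((b-a)/k-1) := by positivity
  exact mul_le_mul_of_nonneg_left (Real.exp_le_exp.2 (mul_le_mul_of_nonneg_right hl hu.1.le)) h0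


def Spx (m : ℕ) : Set (Fin m → ℝ) := {t | (∀ i, 0 < t i) ∧ ∑ i, t i < 1}

lemma measurableSet_Spx (m : ℕ) : MeasurableSet (Spx m) := by
  have h1 : MeasurableSet {t : Fin m → ℝ | ∀ i, 0 < t i} := by
    rw [Set.setOf_forall]
    exact MeasurableSet.iInter fun i => measurableSet_lt measurable_const (measurable_pi_apply i)
  have h2 : MeasurableSet {t : Fin m → ℝ | ∑ i, t i < 1} :=
    measurableSet_lt (Finset.measurable_sum _ fun i _ => measurable_pi_apply i) measurable_const
  exact h1.inter h2

lemma lintegral_scale_simplex {m : ℕ} {c : ℝ} (hc : 0 < c) (f : (Fin m → ℝ) → ℝ≥0∞)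
    (hf : Measurable f) :
    ∫⁻ y in {y : Fin m → ℝ | (∀ i, 0 < y i) ∧ ∑ i, y i < c}, f y
      = ENNReal.ofReal (c ^ m) * ∫⁻ z in Spx m, f (c • z) := by
  set Sc : Set (Fin m → ℝ) := {y | (∀ i, 0 < y i) ∧ ∑ i, y i < c} with hScdef
  have hSc : MeasurableSet Sc := by
    have h1 : MeasurableSet {t : Fin m → ℝ | ∀ i, 0 < t i} := by
      rw [Set.setOf_forall]
      exact MeasurableSet.iInter fun i => measurableSet_lt measurable_const (measurable_pi_apply i)
    have h2 : MeasurableSet {t : Fin m → ℝ | ∑ i, t i < c} :=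
      measurableSet_lt (Finset.measurable_sum _ fun i _ => measurable_pi_apply i) measurable_const
    exact h1.inter h2
  have hpre : (fun z : Fin m → ℝ => c • z) ⁻¹' Sc = Spx m := by
    ext z
    simp only [Set.mem_preimage, hScdef, Set.mem_setOf_eq, Spx, Pi.smul_apply, smul_eq_mul]
    constructor
    · rintro ⟨h1, h2⟩
      refine ⟨fun i => ?_, ?_⟩
      · have := h1 i; nlinarith
      · rw [← Finset.mul_sum] at h2
        exact (mul_lt_iff_lt_one_right hc).1 h2
    · rintro ⟨h1, h2⟩
      refine ⟨fun i => mul_pos hc (h1 i), ?_⟩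
      rw [← Finset.mul_sum]
      calc c * ∑ i, z i < c * 1 := by exact (mul_lt_mul_iff_right₀ hc).2 h2
      _ = c := mul_one c
  have hmap := Measure.map_addHaar_smul (volume : Measure (Fin m → ℝ)) (ne_of_gt hc)
  rw [Module.finrank_fintype_fun_eq_card, Fintype.card_fin] at hmap
  have h1 : ∫⁻ z, (Sc.indicator f) (c • z) ∂volume
      = ∫⁻ y, Sc.indicator f y ∂(Measure.map (c • ·) volume) :=
    (lintegral_map (hf.indicator hSc) (measurable_const_smul c)).symm
  have h2 : ∫⁻ z, (Sc.indicator f) (c • z) ∂volume = ∫⁻ z in Spx m, f (c • z) := by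
    rw [← lintegral_indicator (measurableSet_Spx m)]
    congr 1
    funext z
    rw [← hpre]
    by_cases h : z ∈ (fun z : Fin m → ℝ => c • z) ⁻¹' Sc
    · rw [Set.indicator_of_mem h, Set.indicator_of_mem (Set.mem_preimage.1 h)]
    · rw [Set.indicator_of_notMem h, Set.indicator_of_notMem (fun hh => h (Set.mem_preimage.2 hh))]
  have h3 : ∫⁻ y, Sc.indicator f y ∂(Measure.map (c • ·) volume)
      = ENNReal.ofReal ((c ^ m)⁻¹) * ∫⁻ y in Sc, f y := by
    rw [hmap, lintegral_smul_measure, lintegral_indicator hSc]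
    congr 2
    rw [abs_of_pos (by positivity)]
  have key : ∫⁻ z in Spx m, f (c • z) = ENNReal.ofReal ((c ^ m)⁻¹) * ∫⁻ y in Sc, f y := by
    rw [← h2, h1, h3]
  rw [key, ← mul_assoc, ← ENNReal.ofReal_mul (by positivity), mul_inv_cancel₀ (by positivity),
    ENNReal.ofReal_one, one_mul]

lemma dirichletIntegrable : ∀ (m : ℕ) (d : Fin m → ℝ) (e : ℝ), (∀ i, -1 < d i) → (-1 < e) →
    IntegrableOn (fun t : Fin m → ℝ => (∏ i, t i ^ d i) * (1 - ∑ i, t i) ^ e) (Spx m) := by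
  intro m
  induction m with
  | zero =>
    intro d e hd he
    have heq : (fun t : Fin 0 → ℝ => (∏ i, t i ^ d i) * (1 - ∑ i, t i) ^ e) = fun _ => 1 := by
      funext t; simp
    rw [heq]
    have hprob : IsProbabilityMeasure (volume : Measure (Fin 0 → ℝ)) := by
      constructor
      simp [volume_pi, Measure.pi_univ]
    exact (integrable_const 1).integrableOn
  | succ m IH =>
    intro d e hd he
    set d' : Fin m → ℝ := fun j => d j.succ with hd'def
    have hd' : ∀ j, -1 < d' j := fun j => hd j.succ
    set F : ℝ × (Fin m → ℝ) → ℝ :=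
      fun p => (p.1 ^ d 0 * ∏ j, p.2 j ^ d' j) * (1 - (p.1 + ∑ j, p.2 j)) ^ e with hFdef
    set T : Set (ℝ × (Fin m → ℝ)) :=
      {p | (0 < p.1 ∧ ∀ i, 0 < p.2 i) ∧ p.1 + ∑ i, p.2 i < 1} with hTdef
    have hTmeas : MeasurableSet T := by
      have h1 : MeasurableSet {p : ℝ × (Fin m → ℝ) | 0 < p.1} :=
        measurableSet_lt measurable_const measurable_fst
      have h2 : MeasurableSet {p : ℝ × (Fin m → ℝ) | ∀ i, 0 < p.2 i} := by
        rw [Set.setOf_forall]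
        exact MeasurableSet.iInter fun i =>
          measurableSet_lt measurable_const (measurable_snd.eval)
      have h3 : MeasurableSet {p : ℝ × (Fin m → ℝ) | p.1 + ∑ i, p.2 i < 1} :=
        measurableSet_lt (measurable_fst.add
          (Finset.measurable_sum _ fun i _ => measurable_snd.eval))
          measurable_const
      exact (h1.inter h2).inter h3
    have hFmeas : Measurable F := by
      apply Measurable.mul
      · apply Measurable.mul (measurable_fst.pow_const (d 0))
        exact Finset.measurable_prod Finset.univ fun j _ =>
          (measurable_snd.eval (a := j)).pow_const (d' j)
      · apply Measurable.pow_const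
        exact measurable_const.sub (measurable_fst.add
          (Finset.measurable_sum Finset.univ fun j _ => measurable_snd.eval (a := j)))
    set ψ := MeasurableEquiv.piFinSuccAbove (fun _ : Fin (m+1) => ℝ) 0 with hψdef
    have hcons : ∀ (x : ℝ) (y : Fin m → ℝ), ψ.symm (x, y) = Fin.cons x y := by
      intro x y
      show (Fin.insertNthEquiv (fun _ => ℝ) 0) (x, y) = Fin.cons x y
      simp [Fin.insertNthEquiv, Fin.insertNth_zero']
    have hpre : ψ.symm ⁻¹' (Spx (m+1)) = T := by
      ext ⟨x, y⟩
      simp only [Set.mem_preimage, hcons, Spx, Set.mem_setOf_eq, hTdef,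
        Fin.forall_fin_succ, Fin.sum_univ_succ, Fin.cons_zero, Fin.cons_succ]
    have hFeq : (fun t : Fin (m+1) → ℝ => (∏ i, t i ^ d i) * (1 - ∑ i, t i) ^ e) ∘ ψ.symm = F := by
      funext p
      obtain ⟨x, y⟩ := p
      simp only [Function.comp_apply, hcons, Fin.prod_univ_succ, Fin.sum_univ_succ,
        Fin.cons_zero, Fin.cons_succ, hFdef, hd'def]
    suffices hT' : IntegrableOn F T volume by
      have hmp : MeasurePreserving ψ.symm (volume : Measure (ℝ × (Fin m → ℝ))) volume :=
        (volume_preserving_piFinSuccAbove (fun _ : Fin (m+1) => ℝ) 0).symm ψ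
      have h1 : MeasurePreserving ψ.symm (volume.restrict T) (volume.restrict (Spx (m+1))) := by
        refine ⟨ψ.symm.measurable, ?_⟩
        rw [← hpre, ← MeasurableEquiv.restrict_map ψ.symm volume (Spx (m+1)), hmp.map_eq]
      exact (h1.integrable_comp_emb ψ.symm.measurableEmbedding).1 (by rw [hFeq]; exact hT')
    refine ⟨hFmeas.aestronglyMeasurable.restrict, ?_⟩
    rw [hasFiniteIntegral_iff_norm]
    set Φ : ℝ × (Fin m → ℝ) → ℝ≥0∞ := fun p => ENNReal.ofReal ‖F p‖ with hΦdef
    have hΦmeas : Measurable Φ := ENNReal.measurable_ofReal.comp hFmeas.norm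
    set κ : ℝ := (m:ℝ) + (∑ j, d' j) + e with hκdef
    have hκ : -1 < κ := by
      have h1 : -(m:ℝ) ≤ ∑ j, d' j := by
        calc -(m:ℝ) = ∑ _j : Fin m, (-1 : ℝ) := by simp
        _ ≤ ∑ j, d' j := Finset.sum_le_sum fun j _ => (hd' j).le
      rw [hκdef]; linarith
    set G' : (Fin m → ℝ) → ℝ := fun z => (∏ j, z j ^ d' j) * (1 - ∑ j, z j) ^ e with hG'def
    have hG'meas : Measurable G' :=
      (Finset.measurable_prod Finset.univ fun j _ =>
        (measurable_pi_apply j).pow_const (d' j)).mul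
        ((measurable_const.sub (Finset.measurable_sum Finset.univ fun j _ =>
          measurable_pi_apply j)).pow_const e)
    set K : ℝ≥0∞ := ∫⁻ z in Spx m, ENNReal.ofReal (G' z) with hKdef
    have hKfin : K < ∞ := (IH d' e hd' he).setLIntegral_lt_top
    set B : ℝ → ℝ≥0∞ :=
      (Set.Ioo (0:ℝ) 1).indicator (fun x => ENNReal.ofReal (x ^ d 0 * (1-x) ^ κ) * K) with hBdef
    have hsec : ∀ x : ℝ, MeasurableSet {y : Fin m → ℝ | (x, y) ∈ T} :=
      fun x => measurable_prodMk_left hTmeas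
    have hindsec : ∀ (x : ℝ) (y : Fin m → ℝ),
        T.indicator Φ (x, y) = ({y : Fin m → ℝ | (x, y) ∈ T}).indicator (fun y => Φ (x, y)) y := by
      intro x y
      by_cases h : (x, y) ∈ T
      · rw [Set.indicator_of_mem h,
          Set.indicator_of_mem (show y ∈ {y : Fin m → ℝ | (x, y) ∈ T} from h)]
      · rw [Set.indicator_of_notMem h,
          Set.indicator_of_notMem (show y ∉ {y : Fin m → ℝ | (x, y) ∈ T} from h)]
    have hinner : ∀ x : ℝ, (∫⁻ y, T.indicator Φ (x, y)) ≤ B x := by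
      intro x
      simp_rw [hindsec x]
      rw [lintegral_indicator (hsec x)]
      by_cases hx : x ∈ Set.Ioo (0:ℝ) 1
      · obtain ⟨hx0, hx1⟩ := hx
        have hc : 0 < 1 - x := by linarith
        have hsecEq : {y : Fin m → ℝ | (x, y) ∈ T}
            = {y : Fin m → ℝ | (∀ i, 0 < y i) ∧ ∑ i, y i < 1 - x} := by
          ext y
          simp only [Set.mem_setOf_eq, hTdef]
          constructor
          · rintro ⟨⟨h1, h2⟩, h3⟩; exact ⟨h2, by linarith⟩
          · rintro ⟨h1, h2⟩; exact ⟨⟨hx0, h1⟩, by linarith⟩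
        have hGxmeas : Measurable fun y : Fin m → ℝ =>
            ENNReal.ofReal ((∏ j, y j ^ d' j) * (1 - (x + ∑ j, y j)) ^ e) := by
          apply ENNReal.measurable_ofReal.comp
          exact (Finset.measurable_prod Finset.univ fun j _ =>
            (measurable_pi_apply j).pow_const (d' j)).mul
            ((measurable_const.sub ((measurable_const.add
              (Finset.measurable_sum Finset.univ fun j _ => measurable_pi_apply j)))).pow_const e)
        have hsecMeas : MeasurableSet {y : Fin m → ℝ | (∀ i, 0 < y i) ∧ ∑ i, y i < 1 - x} := by
          have h1 : MeasurableSet {t : Fin m → ℝ | ∀ i, 0 < t i} := by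
            rw [Set.setOf_forall]
            exact MeasurableSet.iInter fun i =>
              measurableSet_lt measurable_const (measurable_pi_apply i)
          exact h1.inter (measurableSet_lt
            (Finset.measurable_sum _ fun i _ => measurable_pi_apply i) measurable_const)
        have hcong : ∀ y ∈ {y : Fin m → ℝ | (∀ i, 0 < y i) ∧ ∑ i, y i < 1 - x},
            Φ (x, y) = ENNReal.ofReal (x ^ d 0)
              * ENNReal.ofReal ((∏ j, y j ^ d' j) * (1 - (x + ∑ j, y j)) ^ e) := by
          intro y hy
          obtain ⟨hy1, hy2⟩ := hy
          have hF0 : F (x, y) = x ^ d 0 * ((∏ j, y j ^ d' j) * (1 - (x + ∑ j, y j)) ^ e) := by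
            rw [hFdef]; ring
          have hprodpos : (0:ℝ) ≤ ∏ j, y j ^ d' j :=
            Finset.prod_nonneg fun j _ => Real.rpow_nonneg (hy1 j).le _
          have hlastpos : (0:ℝ) ≤ (1 - (x + ∑ j, y j)) ^ e :=
            Real.rpow_nonneg (by linarith) _
          rw [hΦdef]
          simp only []
          rw [hF0, Real.norm_eq_abs, abs_of_nonneg (mul_nonneg (Real.rpow_nonneg hx0.le _)
            (mul_nonneg hprodpos hlastpos)), ENNReal.ofReal_mul (Real.rpow_nonneg hx0.le _)]
        rw [hsecEq, setLIntegral_congr_fun hsecMeas hcong,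
          lintegral_const_mul _ hGxmeas,
          lintegral_scale_simplex hc _ hGxmeas]
        have hcong2 : ∀ z ∈ Spx m,
            ENNReal.ofReal ((∏ j, ((1-x) • z) j ^ d' j) * (1 - (x + ∑ j, ((1-x) • z) j)) ^ e)
              = ENNReal.ofReal ((1-x) ^ (∑ j, d' j) * (1-x) ^ e) * ENNReal.ofReal (G' z) := by
          intro z hz
          obtain ⟨hz1, hz2⟩ := hz
          have hzs : (0:ℝ) ≤ 1 - ∑ j, z j := by linarith
          have e1 : ∏ j, ((1-x) • z) j ^ d' j = (1-x) ^ (∑ j, d' j) * ∏ j, z j ^ d' j := by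
            rw [Real.rpow_sum_of_pos hc, ← Finset.prod_mul_distrib]
            refine Finset.prod_congr rfl fun j _ => ?_
            rw [Pi.smul_apply, smul_eq_mul, Real.mul_rpow hc.le (hz1 j).le]
          have e2 : (1 - (x + ∑ j, ((1-x) • z) j)) ^ e = (1-x) ^ e * (1 - ∑ j, z j) ^ e := by
            have : 1 - (x + ∑ j, ((1-x) • z) j) = (1-x) * (1 - ∑ j, z j) := by
              simp only [Pi.smul_apply, smul_eq_mul, ← Finset.mul_sum]
              ring
            rw [this, Real.mul_rpow hc.le hzs]
          rw [e1, e2, hG'def]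
          rw [← ENNReal.ofReal_mul (by positivity)]
          congr 1
          ring
        rw [setLIntegral_congr_fun (measurableSet_Spx m) hcong2,
          lintegral_const_mul _ hG'meas.ennreal_ofReal]
        rw [hBdef]
        rw [Set.indicator_of_mem (Set.mem_Ioo.2 ⟨hx0, hx1⟩)]
        refine le_of_eq ?_
        rw [← hKdef, ← mul_assoc, ← mul_assoc, ← ENNReal.ofReal_mul (Real.rpow_nonneg hx0.le _),
          ← ENNReal.ofReal_mul (by positivity)]
        congr 2
        have hnc : ((1:ℝ)-x) ^ (m:ℕ) = (1-x) ^ ((m:ℕ):ℝ) := (Real.rpow_natCast _ _).symm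
        rw [hnc, hκdef, Real.rpow_add hc, Real.rpow_add hc]
        ring
      · have hemp : {y : Fin m → ℝ | (x, y) ∈ T} = ∅ := by
          ext y
          simp only [Set.mem_setOf_eq, Set.mem_empty_iff_false, iff_false, hTdef]
          rintro ⟨⟨h1, h2⟩, h3⟩
          apply hx
          have hsum : 0 ≤ ∑ i, y i := Finset.sum_nonneg fun i _ => (h2 i).le
          exact Set.mem_Ioo.2 ⟨h1, by linarith⟩
        rw [hemp]
        simp
    calc (∫⁻ p, ENNReal.ofReal ‖F p‖ ∂(volume.restrict T))
        = ∫⁻ p, T.indicator Φ p ∂volume := (lintegral_indicator hTmeas Φ).symm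
      _ = ∫⁻ x, ∫⁻ y, T.indicator Φ (x, y) := by
          rw [Measure.volume_eq_prod]
          exact lintegral_prod _ (hΦmeas.indicator hTmeas).aemeasurable
      _ ≤ ∫⁻ x, B x := lintegral_mono hinner
      _ = (∫⁻ x in Set.Ioo (0:ℝ) 1, ENNReal.ofReal (x ^ d 0 * (1-x) ^ κ)) * K := by
          rw [hBdef, lintegral_indicator measurableSet_Ioo,
            lintegral_mul_const _ (f := fun x : ℝ => ENNReal.ofReal (x ^ d 0 * (1-x) ^ κ)) ((measurable_id'.pow_const (d 0)).mul
                ((measurable_const.sub measurable_id').pow_const κ)).ennreal_ofReal]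
      _ < ∞ := ENNReal.mul_lt_top (betaIntegrable (hd 0) hκ).setLIntegral_lt_top hKfin

lemma bary_castSucc (m : ℕ) (t : Fin m → ℝ) (j : Fin m) :
    bary (m+1) t j.castSucc = t j := by
  have h : ((j.castSucc : Fin (m+1)) : ℕ) < m + 1 - 1 := by
    simpa using j.isLt
  rw [bary, dif_pos h]
  exact congrArg t (Fin.ext (by simp))

lemma bary_last (m : ℕ) (t : Fin m → ℝ) :
    bary (m+1) t (Fin.last m) = 1 - ∑ j, t j := by
  have hnc : ¬ ((Fin.last m : Fin (m+1)) : ℕ) < m + 1 - 1 := by simp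
  rw [bary, dif_neg hnc]
  rfl

lemma prod_bary_rpow (m : ℕ) (t : Fin m → ℝ) (c : Fin (m+1) → ℝ) :
    (∏ i, bary (m+1) t i ^ c i)
      = (∏ j, t j ^ c j.castSucc) * (1 - ∑ j, t j) ^ c (Fin.last m) := by
  rw [Fin.prod_univ_castSucc, bary_last]
  congr 1
  exact Finset.prod_congr rfl fun j _ => by rw [bary_castSucc]

lemma sum_bary (m : ℕ) (t : Fin m → ℝ) : ∑ i, bary (m+1) t i = 1 := by
  rw [Fin.sum_univ_castSucc, bary_last]
  have : ∀ j : Fin m, bary (m+1) t j.castSucc = t j := bary_castSucc m t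
  rw [Finset.sum_congr rfl fun j _ => this j]
  ring

lemma bary_pos {m : ℕ} {t : Fin m → ℝ} (ht : t ∈ Spx m) (i : Fin (m+1)) :
    0 < bary (m+1) t i := by
  refine Fin.lastCases ?_ ?_ i
  · rw [bary_last]; linarith [ht.2]
  · intro j; rw [bary_castSucc]; exact ht.1 j

lemma piT_pos {m : ℕ} {t : Fin m → ℝ} (ht : t ∈ Spx m) : 0 < piT (m+1) t :=
  Finset.prod_pos fun i _ => bary_pos ht i

lemma piT_bound {m : ℕ} {t : Fin m → ℝ} (ht : t ∈ Spx m) :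
    piT (m+1) t * ((m+1:ℕ):ℝ) ^ (m+1) ≤ 1 := by
  have h1 : ∀ i, 0 < bary (m+1) t i := bary_pos ht
  have h2 : ∑ i, bary (m+1) t i = 1 := sum_bary m t
  have hnn : (0:ℝ) < ((m+1:ℕ):ℝ) := by positivity
  have hgm := Real.geom_mean_le_arith_mean_weighted Finset.univ
    (fun _ => 1/((m+1:ℕ):ℝ)) (fun i => bary (m+1) t i)
    (fun i _ => by positivity) (by
      rw [Finset.sum_const, Finset.card_univ, Fintype.card_fin]
      rw [nsmul_eq_mul, mul_one_div_cancel hnn.ne']) (fun i _ => (h1 i).le)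
  rw [← Finset.mul_sum, h2, mul_one] at hgm
  have hpow : (∏ i, bary (m+1) t i ^ (1/((m+1:ℕ):ℝ))) ^ (m+1) = piT (m+1) t := by
    rw [← Finset.prod_pow]
    unfold piT
    refine Finset.prod_congr rfl fun i _ => ?_
    rw [← Real.rpow_natCast (bary (m+1) t i ^ (1/((m+1:ℕ):ℝ))) (m+1),
      ← Real.rpow_mul (h1 i).le, one_div, inv_mul_cancel₀ (ne_of_gt hnn), Real.rpow_one]
  have hple : piT (m+1) t ≤ (1/((m+1:ℕ):ℝ)) ^ (m+1) := by
    rw [← hpow]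
    exact pow_le_pow_left₀ (Finset.prod_nonneg fun i _ => Real.rpow_nonneg (h1 i).le _) hgm _
  calc piT (m+1) t * ((m+1:ℕ):ℝ) ^ (m+1)
      ≤ (1/((m+1:ℕ):ℝ)) ^ (m+1) * ((m+1:ℕ):ℝ) ^ (m+1) :=
        mul_le_mul_of_nonneg_right hple (by positivity)
    _ = ((1/((m+1:ℕ):ℝ)) * ((m+1:ℕ):ℝ)) ^ (m+1) := (mul_pow _ _ _).symm
    _ = 1 := by rw [one_div, inv_mul_cancel₀ (ne_of_gt hnn), one_pow]

lemma bary_measurable (m : ℕ) (i : Fin (m+1)) :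
    Measurable (fun t : Fin m → ℝ => bary (m+1) t i) := by
  by_cases hi : (i : ℕ) < m + 1 - 1
  · simp only [bary, dif_pos hi]
    exact measurable_pi_apply _
  · simp only [bary, dif_neg hi]
    exact measurable_const.sub (Finset.measurable_sum _ fun j _ => measurable_pi_apply j)

theorem stmt12 (n : ℕ) (hn : 2 ≤ n) (k a b η ζ : ℝ) (hk : 0 < k) (ha : 0 < a)
    (hab : 0 < b - a) (hη : 0 < η) (hζ : 0 ≤ ζ)
    (φ : Fin n → ℝ) (hφ : ∀ i, 0 < φ i) :
    betaKe n k φ η * Real.exp (-(ζ^k) / (η^k * (n:ℝ)^n)) *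
        F1k k (b - a) b (η^k * (n:ℝ)^n / k) ≤
      betaFirst n k a b η ζ φ := by
  obtain ⟨m, rfl⟩ : ∃ m, n = m + 1 := ⟨n - 1, by omega⟩
  have hηk : 0 < η ^ k := Real.rpow_pos_of_pos hη k
  have hζk : 0 ≤ ζ ^ k := Real.rpow_nonneg hζ k
  have hba : 0 < b - (b - a) := by rw [sub_sub_cancel]; exact ha
  set N : ℝ := ((m+1:ℕ):ℝ) ^ (m+1) with hNdef
  have hN : 0 < N := by positivity
  set E : ℝ := Real.exp (-(ζ^k) / (η^k * N)) with hEdef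
  set F0 : ℝ := F1k k (b - a) b (η^k * N / k) with hF0def
  have hF0 : 0 ≤ F0 := F1k_nonneg hk hab hba _
  set h : (Fin m → ℝ) → ℝ := fun t =>
    (∏ i, bary (m+1) t i ^ (φ i / k - 1)) * Real.exp (-(η^k)/(k * piT (m+1) t)) with hhdef
  set G : (Fin m → ℝ) → ℝ := fun t =>
    (∏ i, bary (m+1) t i ^ (φ i / k - 1)) *
      F1k k a b (-(η^k)/(k * piT (m+1) t) - ζ^k * piT (m+1) t / η^k) with hGdef
  set P : (Fin m → ℝ) → ℝ := fun t => ∏ i, bary (m+1) t i ^ (φ i / k - 1) with hPdef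
  -- integrability of P
  have hPint : IntegrableOn P (Spx m) := by
    have heq : P = fun t : Fin m → ℝ =>
        (∏ j, t j ^ ((fun j : Fin m => φ j.castSucc / k - 1) j))
          * (1 - ∑ j, t j) ^ (φ (Fin.last m) / k - 1) := by
      funext t
      rw [hPdef]
      exact prod_bary_rpow m t (fun i => φ i / k - 1)
    rw [heq]
    refine dirichletIntegrable m _ _ (fun j => ?_) ?_
    · have hd := div_pos (hφ j.castSucc) hk
      show (-1:ℝ) < φ j.castSucc / k - 1
      linarith
    · have hd := div_pos (hφ (Fin.last m)) hk; linarith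
  have hPmeas : Measurable P :=
    Finset.measurable_prod _ fun i _ => (bary_measurable m i).pow_const _
  have hπmeas : Measurable (fun t : Fin m → ℝ => piT (m+1) t) :=
    Finset.measurable_prod _ fun i _ => bary_measurable m i
  have hP0 : ∀ t ∈ Spx m, 0 ≤ P t := fun t ht =>
    Finset.prod_nonneg fun i _ => Real.rpow_nonneg (bary_pos ht i).le _
  have hhmeas : Measurable h :=
    hPmeas.mul (Real.measurable_exp.comp (measurable_const.div (measurable_const.mul hπmeas)))
  have hargmeas : Measurable (fun t : Fin m → ℝ =>
      -(η^k)/(k * piT (m+1) t) - ζ^k * piT (m+1) t / η^k) :=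
    (measurable_const.div (measurable_const.mul hπmeas)).sub
      ((measurable_const.mul hπmeas).div_const _)
  have hGmeas : Measurable G :=
    hPmeas.mul ((F1k_mono hk ha hab).measurable.comp hargmeas)
  have hargle : ∀ t ∈ Spx m,
      -(η^k)/(k * piT (m+1) t) - ζ^k * piT (m+1) t / η^k ≤ 0 := by
    intro t ht
    have hπ := piT_pos ht
    have h1 : -(η^k)/(k * piT (m+1) t) ≤ 0 :=
      div_nonpos_of_nonpos_of_nonneg (neg_nonpos.2 hηk.le) (mul_pos hk hπ).le
    have h2 : 0 ≤ ζ^k * piT (m+1) t / η^k := div_nonneg (mul_nonneg hζk hπ.le) hηk.le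
    linarith
  have hhint : IntegrableOn h (Spx m) := by
    refine Integrable.mono' hPint hhmeas.aestronglyMeasurable.restrict ?_
    filter_upwards [ae_restrict_mem (measurableSet_Spx m)] with t ht
    have hπ := piT_pos ht
    rw [hhdef, Real.norm_eq_abs,
      abs_of_nonneg (mul_nonneg (hP0 t ht) (Real.exp_pos _).le)]
    calc P t * Real.exp (-(η^k)/(k * piT (m+1) t)) ≤ P t * 1 := by
          refine mul_le_mul_of_nonneg_left ?_ (hP0 t ht)
          rw [Real.exp_le_one_iff]
          exact div_nonpos_of_nonpos_of_nonneg (neg_nonpos.2 hηk.le) (mul_pos hk hπ).le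
      _ = P t := mul_one _
  have hGint : IntegrableOn G (Spx m) := by
    refine Integrable.mono' (hPint.mul_const (F1k k a b 0))
      hGmeas.aestronglyMeasurable.restrict ?_
    filter_upwards [ae_restrict_mem (measurableSet_Spx m)] with t ht
    rw [hGdef, Real.norm_eq_abs,
      abs_of_nonneg (mul_nonneg (hP0 t ht) (F1k_nonneg hk ha hab _))]
    exact mul_le_mul_of_nonneg_left (F1k_mono hk ha hab (hargle t ht)) (hP0 t ht)
  have key : ∀ t ∈ Spx m, h t * (E * F0) ≤ G t := by
    intro t ht
    have hπ := piT_pos ht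
    have hπb := piT_bound ht
    rw [← hNdef] at hπb
    have hl0 : -(η^k)/(k * piT (m+1) t) - ζ^k * piT (m+1) t / η^k
        = -(η^k/(k * piT (m+1) t) + ζ^k * piT (m+1) t / η^k) := by ring
    rw [hGdef]
    simp only []
    rw [hl0, F1k_kummer k a b _]
    have hexp : Real.exp (-(η^k/(k * piT (m+1) t) + ζ^k * piT (m+1) t / η^k))
        = Real.exp (-(η^k)/(k * piT (m+1) t)) * Real.exp (-(ζ^k * piT (m+1) t / η^k)) := by
      rw [← Real.exp_add]; congr 1; ring
    rw [hexp]
    have hπN : piT (m+1) t ≤ 1 / N := by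
      rw [le_div_iff₀ hN]; exact hπb
    have hE : E ≤ Real.exp (-(ζ^k * piT (m+1) t / η^k)) := by
      rw [hEdef, Real.exp_le_exp]
      have h2 : ζ^k * piT (m+1) t / η^k = (ζ^k / η^k) * piT (m+1) t := by ring
      have h3 : ζ^k / (η^k * N) = (ζ^k / η^k) * (1/N) := by ring
      have h1 : ζ^k * piT (m+1) t / η^k ≤ ζ^k / (η^k * N) := by
        rw [h2, h3]
        exact mul_le_mul_of_nonneg_left hπN (div_nonneg hζk hηk.le)
      have h4 : -(ζ^k)/(η^k*N) = -(ζ^k/(η^k*N)) := by ring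
      rw [h4]
      linarith
    have hF : F0 ≤ F1k k (b-a) b (η^k/(k * piT (m+1) t) + ζ^k * piT (m+1) t / η^k) := by
      rw [hF0def]
      refine F1k_mono hk hab hba ?_
      have h1 : N ≤ 1 / piT (m+1) t := by
        rw [le_div_iff₀ hπ, mul_comm]; exact hπb
      have h2 : η^k * N / k ≤ η^k/(k * piT (m+1) t) := by
        have e1 : η^k * N / k = (η^k / k) * N := by ring
        have e2 : η^k/(k * piT (m+1) t) = (η^k / k) * (1 / piT (m+1) t) := by ring
        rw [e1, e2]
        exact mul_le_mul_of_nonneg_left h1 (div_nonneg hηk.le hk.le)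
      have h3 : 0 ≤ ζ^k * piT (m+1) t / η^k :=
        div_nonneg (mul_nonneg hζk hπ.le) hηk.le
      linarith
    calc h t * (E * F0)
        ≤ h t * (Real.exp (-(ζ^k * piT (m+1) t / η^k))
            * F1k k (b-a) b (η^k/(k * piT (m+1) t) + ζ^k * piT (m+1) t / η^k)) := by
          refine mul_le_mul_of_nonneg_left (mul_le_mul hE hF hF0 (Real.exp_pos _).le) ?_
          exact mul_nonneg (hP0 t ht) (Real.exp_pos _).le
      _ = P t * (Real.exp (-(η^k)/(k * piT (m+1) t))
            * Real.exp (-(ζ^k * piT (m+1) t / η^k))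
            * F1k k (b-a) b (η^k/(k * piT (m+1) t) + ζ^k * piT (m+1) t / η^k)) := by
          rw [hhdef]; ring
  have hbetaKe : betaKe (m+1) k φ η = 1/k^(m+1-1) * ∫ t in Spx m, h t := rfl
  have hbetaFirst : betaFirst (m+1) k a b η ζ φ = 1/k^(m+1-1) * ∫ t in Spx m, G t := rfl
  rw [hbetaKe, hbetaFirst]
  have hc0 : (0:ℝ) ≤ 1/k^(m+1-1) := by positivity
  calc (1/k^(m+1-1) * ∫ t in Spx m, h t) * E * F0
      = 1/k^(m+1-1) * ((∫ t in Spx m, h t) * (E * F0)) := by ring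
    _ = 1/k^(m+1-1) * ∫ t in Spx m, h t * (E * F0) := by
        rw [MeasureTheory.integral_mul_const]
    _ ≤ 1/k^(m+1-1) * ∫ t in Spx m, G t := by
        refine mul_le_mul_of_nonneg_left ?_ hc0
        exact setIntegral_mono_on (hhint.mul_const _) hGint (measurableSet_Spx m) key
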